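/- For every integer n ≥ 4 and r, s ∈ {0, 1, …, n−3}, the graph G (equal to G_{n,r,s} or to G⁺_{n,r,s}) is 3-connected if and only if either (i) the plus edge is present and {r, s} = {1, n−3} (that is, r = 1 and s = n−3, or r = n−3 and s = 1), or (ii) r ≥ 2, s ≥ 2, and r + s ≥ n − 2. -/

import Mathlib

namespace K24Paper

open SimpleGraph

/-- `H` is a minor of `G`: branch sets indexed by vertices of `H`, pairwise disjoint,
each inducing a connected subgraph of `G`, with every edge of `H` realized by an edge
of `G` between the corresponding branch sets. -/
def IsMinor {W V : Type*} (H : SimpleGraph W) (G : SimpleGraph V) : Prop :=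
  ∃ B : W → Set V,
    (∀ w, (G.induce (B w)).Connected) ∧
    (∀ w₁ w₂, w₁ ≠ w₂ → Disjoint (B w₁) (B w₂)) ∧
    (∀ w₁ w₂, H.Adj w₁ w₂ → ∃ v₁ ∈ B w₁, ∃ v₂ ∈ B w₂, G.Adj v₁ v₂)

/-- `G` is `H`-minor-free. -/
def MinorFree {W V : Type*} (H : SimpleGraph W) (G : SimpleGraph V) : Prop :=
  ¬ IsMinor H G

/-- The complete bipartite graph `K_{2,4}`. -/
def K24 : SimpleGraph (Fin 2 ⊕ Fin 4) := completeBipartiteGraph (Fin 2) (Fin 4)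

/-- `G` is `k`-connected: more than `k` vertices, and removing fewer than `k`
vertices leaves a connected graph. -/
def KConnected {V : Type*} (k : ℕ) (G : SimpleGraph V) : Prop :=
  k < Nat.card V ∧ ∀ S : Set V, S.ncard < k → (G.induce Sᶜ).Connected

/-- The graph `G_{n,r,s}` (with the plus edge if `plus = true`), on vertices
`0, …, n-1` corresponding to `v_1, …, v_n`:  the spine `v_1 v_2 ⋯ v_n`, the edges
`v_1 v_{n-i}` for `1 ≤ i ≤ r`, the edges `v_n v_{1+j}` for `1 ≤ j ≤ s`, and
(if `plus`) the plus edge `v_1 v_n`. -/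
def Gnrs (n r s : ℕ) (plus : Bool) : SimpleGraph (Fin n) :=
  SimpleGraph.fromRel (fun a b =>
    b.val = a.val + 1 ∨
    (a.val = 0 ∧ n - 1 - r ≤ b.val ∧ b.val ≤ n - 2) ∨
    (b.val = n - 1 ∧ 1 ≤ a.val ∧ a.val ≤ s) ∨
    (plus = true ∧ a.val = 0 ∧ b.val = n - 1))

/-- The parameter conditions describing membership in the class `𝒢`. -/
def Gparams (n r s : ℕ) (plus : Bool) : Prop :=
  (plus = true ∧ 4 ≤ n ∧ ((r = 1 ∧ s = n - 3) ∨ (r = n - 3 ∧ s = 1))) ∨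
  (5 ≤ n ∧ 2 ≤ r ∧ r ≤ n - 3 ∧ 2 ≤ s ∧ s ≤ n - 3 ∧ (r + s = n - 2 ∨ r + s = n - 1))

/-- `G` belongs to `𝒢̃`, i.e. `G` is isomorphic to a graph of the class `𝒢`. -/
def InGtilde {V : Type*} (G : SimpleGraph V) : Prop :=
  ∃ n r s plus, Gparams n r s plus ∧ Nonempty (G ≃g Gnrs n r s plus)

/-- The graph obtained from `G` by subdividing every edge in `F` once:
new vertices are the members of `F`. -/
def SubdivideEdges {V : Type*} (G : SimpleGraph V) (F : Set (Sym2 V)) :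
    SimpleGraph (V ⊕ F) :=
  SimpleGraph.fromRel (fun a b =>
    match a, b with
    | Sum.inl u, Sum.inl v => G.Adj u v ∧ s(u, v) ∉ F
    | Sum.inl u, Sum.inr e => u ∈ (e : Sym2 V)
    | Sum.inr e, Sum.inl u => u ∈ (e : Sym2 V)
    | Sum.inr _, Sum.inr _ => False)

/-- A set `F` of edges of a graph `G` is subdividable if subdividing every edge
of `F` once yields a `K_{2,4}`-minor-free graph. -/
def Subdividable {V : Type*} (G : SimpleGraph V) (F : Set (Sym2 V)) : Prop :=
  F ⊆ G.edgeSet ∧ MinorFree K24 (SubdivideEdges G F)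

/-- `F` is a maximal subdividable set of edges of `G`. -/
def MaxSubdividable {V : Type*} (G : SimpleGraph V) (F : Set (Sym2 V)) : Prop :=
  Subdividable G F ∧ ∀ F', Subdividable G F' → F ⊆ F' → F' = F

/-- `l` lists vertices along a path of `G` (consecutive entries adjacent, no repeats)
such that no two edges of `G` cross with respect to this ordering. -/
def OuterListing {U : Type*} (G : SimpleGraph U) (l : List U) : Prop :=
  l.Nodup ∧ l.Chain' G.Adj ∧
  ∀ (i k j m : ℕ) (h1 : i < k) (h2 : k < j) (h3 : j < m) (hm : m < l.length),
    ¬(G.Adj (l.get ⟨i, by omega⟩) (l.get ⟨j, by omega⟩) ∧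
      G.Adj (l.get ⟨k, by omega⟩) (l.get ⟨m, by omega⟩))

/-- The graph `G` restricted to the vertex set `A` is `xy`-outerplanar: it has a
hamilton `xy`-path (listing exactly the vertices of `A`) such that no two edges
cross with respect to it. -/
def XYOuterplanar {U : Type*} (G : SimpleGraph U) (A : Set U) (x y : U) : Prop :=
  ∃ l : List U, (∀ v, v ∈ l ↔ v ∈ A) ∧ l.head? = some x ∧ l.getLast? = some y ∧
    OuterListing G l

/-- A block: a connected graph with no cutvertex. -/
def IsBlock {V : Type*} (G : SimpleGraph V) : Prop :=
  G.Connected ∧ ∀ v : V, (G.induce {u | u ≠ v}).Preconnected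

/-- `G + xy`: the graph `G` with the edge `xy` added (if not already present). -/
def AddEdge {U : Type*} (G : SimpleGraph U) (x y : U) : SimpleGraph U :=
  G ⊔ SimpleGraph.fromRel (fun a b => a = x ∧ b = y)

/-- A standard `K_{2,t}` minor `(R₁, R₂; S)` of `G`. -/
def StdK2tMinor {V : Type*} (G : SimpleGraph V) (t : ℕ) (R₁ R₂ S : Set V) : Prop :=
  Disjoint R₁ R₂ ∧ Disjoint (R₁ ∪ R₂) S ∧
  (G.induce R₁).Connected ∧ (G.induce R₂).Connected ∧
  S.Finite ∧ S.ncard = t ∧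
  ∀ v ∈ S, (∃ w ∈ R₁, G.Adj v w) ∧ (∃ w ∈ R₂, G.Adj v w)

/-- `K_{3,3}` with parts `{0,1,2}` and `{3,4,5}`. -/
def K33 : SimpleGraph (Fin 6) :=
  SimpleGraph.fromRel (fun a b => a.val < 3 ∧ 3 ≤ b.val)

/-- The graph `A = K_{3,3} + v₂v₃`. -/
def GA : SimpleGraph (Fin 6) := AddEdge K33 1 2

/-- The graph `A⁺ = K_{3,3} + v₂v₃ + v₅v₆`. -/
def GAplus : SimpleGraph (Fin 6) := AddEdge GA 4 5

/-- The graph `B`, on vertices `h, r₁, r₂, r₃, r₄, g₁, g₂ = 0, …, 6`. -/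
def GB : SimpleGraph (Fin 7) :=
  SimpleGraph.fromRel (fun a b => (a.val, b.val) ∈
    [(0,3),(0,4),(1,4),(2,3),(3,4),(5,0),(5,1),(5,2),(6,0),(6,1),(6,2)])

/-- The graph `B⁺ = B + g₁g₂`. -/
def GBplus : SimpleGraph (Fin 7) := AddEdge GB 5 6

/-- The graph `C⁺`, on vertices `v₁, …, v₈ = 0, …, 7`. -/
def GCplus : SimpleGraph (Fin 8) :=
  SimpleGraph.fromRel (fun a b => (a.val, b.val) ∈
    [(0,1),(0,2),(1,2),(3,4),(3,5),(3,6),(3,7),(4,5),(4,6),(4,7),(2,5),(1,7),(0,6)])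

/-- The graph `C = C⁺ ∖ v₄v₅`. -/
def GC : SimpleGraph (Fin 8) := GCplus.deleteEdges {s(3, 4)}

/-- The graph `D`, on vertices `t₁, t₂, t₃, d₁, d₂, d₃, g = 0, …, 6`. -/
def GD : SimpleGraph (Fin 7) :=
  SimpleGraph.fromRel (fun a b => (a.val, b.val) ∈
    [(0,1),(0,2),(1,2),(3,4),(3,5),(4,5),(0,3),(1,4),(2,5),(6,0),(6,1),(6,2)])

/-- The complete graph `K₅`. -/
def GK5 : SimpleGraph (Fin 5) := completeGraph (Fin 5)

end K24Paper

namespace K24Paper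

lemma val_mk' {n a : ℕ} (h : a < n) : (⟨a, h⟩ : Fin n).val = a := rfl

lemma gnrs_adj {n r s : ℕ} {plus : Bool} {a b : Fin n} :
    (Gnrs n r s plus).Adj a b ↔ a ≠ b ∧
      ((b.val = a.val + 1 ∨ (a.val = 0 ∧ n - 1 - r ≤ b.val ∧ b.val ≤ n - 2) ∨
        (b.val = n - 1 ∧ 1 ≤ a.val ∧ a.val ≤ s) ∨ (plus = true ∧ a.val = 0 ∧ b.val = n - 1)) ∨
       (a.val = b.val + 1 ∨ (b.val = 0 ∧ n - 1 - r ≤ a.val ∧ a.val ≤ n - 2) ∨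
        (a.val = n - 1 ∧ 1 ≤ b.val ∧ b.val ≤ s) ∨ (plus = true ∧ b.val = 0 ∧ a.val = n - 1))) := by
  simp only [Gnrs, SimpleGraph.fromRel_adj]

lemma adj_succ {n r s : ℕ} {plus : Bool} {a b : Fin n} (h : b.val = a.val + 1) :
    (Gnrs n r s plus).Adj a b := by
  rw [gnrs_adj]
  exact ⟨Fin.ne_of_val_ne (by omega), Or.inl (Or.inl h)⟩

lemma adj_hub0 {n r s : ℕ} {plus : Bool} {a b : Fin n} (hn : 4 ≤ n) (hr : r ≤ n - 3)
    (ha : a.val = 0) (h1 : n - 1 - r ≤ b.val) (h2 : b.val ≤ n - 2) :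
    (Gnrs n r s plus).Adj a b := by
  rw [gnrs_adj]
  exact ⟨Fin.ne_of_val_ne (by omega), Or.inl (Or.inr (Or.inl ⟨ha, h1, h2⟩))⟩

lemma adj_hublast {n r s : ℕ} {plus : Bool} {a b : Fin n} (hn : 4 ≤ n) (hs : s ≤ n - 3)
    (hb : b.val = n - 1) (h1 : 1 ≤ a.val) (h2 : a.val ≤ s) :
    (Gnrs n r s plus).Adj a b := by
  rw [gnrs_adj]
  exact ⟨Fin.ne_of_val_ne (by omega), Or.inl (Or.inr (Or.inr (Or.inl ⟨hb, h1, h2⟩)))⟩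

lemma adj_plus {n r s : ℕ} {plus : Bool} {a b : Fin n} (hn : 4 ≤ n) (hp : plus = true)
    (ha : a.val = 0) (hb : b.val = n - 1) :
    (Gnrs n r s plus).Adj a b := by
  rw [gnrs_adj]
  exact ⟨Fin.ne_of_val_ne (by omega), Or.inl (Or.inr (Or.inr (Or.inr ⟨hp, ha, hb⟩)))⟩

lemma no_reach {V : Type*} {H : SimpleGraph V} {x y : V}
    (hiso : ∀ z, ¬ H.Adj x z) (h : H.Reachable x y) : x = y := by
  obtain ⟨w⟩ := h
  cases w with
  | nil => rfl
  | cons h p => exact absurd h (hiso _)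

lemma three_le {n : ℕ} {S : Set (Fin n)} {a b c : Fin n} (ha : a ∈ S) (hb : b ∈ S) (hc : c ∈ S)
    (hab : a.val ≠ b.val) (hac : a.val ≠ c.val) (hbc : b.val ≠ c.val) : 3 ≤ S.ncard := by
  have hsub : ({a, b, c} : Set (Fin n)) ⊆ S := by
    intro z hz
    simp only [Set.mem_insert_iff, Set.mem_singleton_iff] at hz
    rcases hz with rfl | rfl | rfl <;> assumption
  have h3 : ({a, b, c} : Set (Fin n)).ncard = 3 := by
    rw [Set.ncard_insert_of_notMem (by
        simp only [Set.mem_insert_iff, Set.mem_singleton_iff]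
        push_neg
        exact ⟨Fin.ne_of_val_ne hab, Fin.ne_of_val_ne hac⟩),
      Set.ncard_insert_of_notMem (by
        simp only [Set.mem_singleton_iff]
        exact Fin.ne_of_val_ne hbc),
      Set.ncard_singleton]
  rw [← h3]
  exact Set.ncard_le_ncard hsub (Set.toFinite S)

lemma val_ne {n : ℕ} {S : Set (Fin n)} {w u : Fin n} (hw : w ∉ S) (hu : u ∈ S) :
    w.val ≠ u.val := by
  intro he
  cases Fin.ext he
  exact hw hu

lemma reach_spine {n : ℕ} {G : SimpleGraph (Fin n)}
    (hG : ∀ a b : Fin n, b.val = a.val + 1 → G.Adj a b) {S : Set (Fin n)} :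
    ∀ (k : ℕ) (a b : Fin n) (ha : a ∈ Sᶜ) (hb : b ∈ Sᶜ),
      b.val = a.val + k → (∀ z : Fin n, a.val ≤ z.val → z.val ≤ b.val → z ∈ Sᶜ) →
      (G.induce Sᶜ).Reachable ⟨a, ha⟩ ⟨b, hb⟩ := by
  intro k
  induction k with
  | zero =>
    intro a b ha hb hk _
    have hab : a = b := Fin.ext (by omega)
    subst hab
    exact SimpleGraph.Reachable.refl _
  | succ k ih =>
    intro a b ha hb hk hall
    have hcn : a.val + k < n := by have := b.isLt; omega
    have hcS : (⟨a.val + k, hcn⟩ : Fin n) ∈ Sᶜ :=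
      hall _ ((by omega : a.val ≤ a.val + k)) ((by omega : a.val + k ≤ b.val))
    refine (ih a ⟨a.val + k, hcn⟩ ha hcS rfl fun z h1 h2 =>
      hall z h1 (le_trans h2 ((by omega : a.val + k ≤ b.val)))).trans ?_
    have hadj : G.Adj (⟨a.val + k, hcn⟩ : Fin n) b := hG _ _ ((by omega : b.val = a.val + k + 1))
    exact SimpleGraph.Adj.reachable (hadj : (G.induce Sᶜ).Adj ⟨_, hcS⟩ ⟨b, hb⟩)

lemma cut2 {n : ℕ} {G : SimpleGraph (Fin n)}
    (hK : KConnected 3 G)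
    (a b x y : ℕ) (han : a < n) (hbn : b < n) (hxn : x < n) (hyn : y < n)
    (hxa : x ≠ a) (hxb : x ≠ b) (hya : y ≠ a) (hyb : y ≠ b) (hxy : x ≠ y)
    (hiso : ∀ z : Fin n, z.val ≠ a → z.val ≠ b → z.val ≠ x → ¬ G.Adj ⟨x, hxn⟩ z) : False := by
  set S : Set (Fin n) := {⟨a, han⟩, ⟨b, hbn⟩} with hSdef
  have hcard : S.ncard < 3 := by
    have h1 : S.ncard ≤ ({(⟨b, hbn⟩ : Fin n)} : Set (Fin n)).ncard + 1 := Set.ncard_insert_le _ _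
    rw [Set.ncard_singleton] at h1
    omega
  have hconn := hK.2 S hcard
  have hxS : (⟨x, hxn⟩ : Fin n) ∈ Sᶜ := by
    simp only [hSdef, Set.mem_compl_iff, Set.mem_insert_iff, Set.mem_singleton_iff, not_or,
      Fin.mk.injEq]
    exact ⟨hxa, hxb⟩
  have hyS : (⟨y, hyn⟩ : Fin n) ∈ Sᶜ := by
    simp only [hSdef, Set.mem_compl_iff, Set.mem_insert_iff, Set.mem_singleton_iff, not_or,
      Fin.mk.injEq]
    exact ⟨hya, hyb⟩
  have hre := hconn.preconnected ⟨⟨x, hxn⟩, hxS⟩ ⟨⟨y, hyn⟩, hyS⟩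
  have heq := no_reach (x := (⟨⟨x, hxn⟩, hxS⟩ : ↥Sᶜ)) (fun z hadj => by
    have hz2 : z.1 ∉ S := z.2
    simp only [hSdef, Set.mem_insert_iff, Set.mem_singleton_iff, not_or] at hz2
    have hza : z.1.val ≠ a := fun h => hz2.1 (Fin.ext h)
    have hzb : z.1.val ≠ b := fun h => hz2.2 (Fin.ext h)
    by_cases hzx : z.1.val = x
    · have heq2 : z.1 = ⟨x, hxn⟩ := Fin.ext hzx
      have hadj' : G.Adj ⟨x, hxn⟩ z.1 := hadj
      rw [heq2] at hadj'
      exact G.loopless.irrefl _ hadj'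
    · exact hiso z.1 hza hzb hzx hadj) hre
  have hxy2 : x = y := by
    have := congrArg (fun w : ↥Sᶜ => (w.1 : Fin n).val) heq
    simpa using this
  exact hxy hxy2

end K24Paper

namespace K24Paper

/-- Lemma 1: for `n ≥ 4` and `r, s ∈ {0, …, n-3}`, the graph
`G^{(+)}_{n,r,s}` is 3-connected iff (i) the plus edge is present and
`{r,s} = {1, n-3}`, or (ii) `r, s ≥ 2` and `r + s ≥ n - 2`. -/
theorem Gnrs_threeConnected_iff (n r s : ℕ) (plus : Bool)
    (hn : 4 ≤ n) (hr : r ≤ n - 3) (hs : s ≤ n - 3) :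
    KConnected 3 (Gnrs n r s plus) ↔
      ((plus = true ∧ ((r = 1 ∧ s = n - 3) ∨ (r = n - 3 ∧ s = 1))) ∨
       (2 ≤ r ∧ 2 ≤ s ∧ n - 2 ≤ r + s)) := by
  constructor
  · intro hK
    by_contra hc
    have hfacts : (r + s ≤ n - 3) ∨ (plus = false ∧ r = 1 ∧ s = n - 3) ∨
        (plus = false ∧ r = n - 3 ∧ s = 1) := by
      cases plus with
      | false =>
        simp only [Bool.false_eq_true, false_and, false_or] at hc
        have harith : r + s ≤ n - 3 ∨ (r = 1 ∧ s = n - 3) ∨ (r = n - 3 ∧ s = 1) := by omega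
        rcases harith with h | h | h
        · exact Or.inl h
        · exact Or.inr (Or.inl ⟨rfl, h.1, h.2⟩)
        · exact Or.inr (Or.inr ⟨rfl, h.1, h.2⟩)
      | true =>
        simp only [true_and, not_or] at hc
        exact Or.inl (by omega)
    rcases hfacts with hA | ⟨hp, hr1, hsv⟩ | ⟨hp, hrv, hs1⟩
    · by_cases hy : s + 2 = n - 1
      · refine cut2 hK s (s+2) (s+1) 0 (by omega) (by omega) (by omega) (by omega)
          (by omega) (by omega) (by omega) (by omega) (by omega) ?_
        intro z h1 h2 h3 hadj
        rw [gnrs_adj] at hadj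
        obtain ⟨hne, hrel⟩ := hadj
        have h4 := z.isLt
        simp only [val_mk'] at hrel
        rcases hrel with (h|h|h|⟨hp', h⟩)|(h|h|h|⟨hp', h⟩) <;> omega
      · refine cut2 hK s (s+2) (s+1) (n-1) (by omega) (by omega) (by omega) (by omega)
          (by omega) (by omega) (by omega) (by omega) (by omega) ?_
        intro z h1 h2 h3 hadj
        rw [gnrs_adj] at hadj
        obtain ⟨hne, hrel⟩ := hadj
        have h4 := z.isLt
        simp only [val_mk'] at hrel
        rcases hrel with (h|h|h|⟨hp', h⟩)|(h|h|h|⟨hp', h⟩) <;> omega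
    · subst hp; subst hr1; subst hsv
      refine cut2 hK 1 (n-2) 0 (n-1) (by omega) (by omega) (by omega) (by omega)
        (by omega) (by omega) (by omega) (by omega) (by omega) ?_
      intro z h1 h2 h3 hadj
      rw [gnrs_adj] at hadj
      obtain ⟨hne, hrel⟩ := hadj
      have h4 := z.isLt
      simp only [val_mk'] at hrel
      rcases hrel with (h|h|h|⟨hp', h⟩)|(h|h|h|⟨hp', h⟩) <;>
        first | omega | exact Bool.noConfusion hp'
    · subst hp; subst hrv; subst hs1
      refine cut2 hK 1 (n-2) (n-1) 0 (by omega) (by omega) (by omega) (by omega)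
        (by omega) (by omega) (by omega) (by omega) (by omega) ?_
      intro z h1 h2 h3 hadj
      rw [gnrs_adj] at hadj
      obtain ⟨hne, hrel⟩ := hadj
      have h4 := z.isLt
      simp only [val_mk'] at hrel
      rcases hrel with (h|h|h|⟨hp', h⟩)|(h|h|h|⟨hp', h⟩) <;>
        first | omega | exact Bool.noConfusion hp'
  · intro hcond
    have harith : 1 ≤ r ∧ 1 ≤ s ∧ n - 2 ≤ r + s := by
      rcases hcond with ⟨hp, h⟩ | ⟨h1, h2, h3⟩ <;> omega
    obtain ⟨hr1, hs1, hrs⟩ := harith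
    have hplus_or : plus = true ∨ (2 ≤ r ∧ 2 ≤ s) := by
      rcases hcond with ⟨hp, h⟩ | ⟨h1, h2, h3⟩
      · exact Or.inl hp
      · exact Or.inr ⟨h1, h2⟩
    constructor
    · rw [Nat.card_eq_fintype_card, Fintype.card_fin]; omega
    · intro S hS
      have hG : ∀ a b : Fin n, b.val = a.val + 1 → (Gnrs n r s plus).Adj a b :=
        fun a b h => adj_succ h
      have step : ∀ (a b : Fin n) (ha : a ∈ Sᶜ) (hb : b ∈ Sᶜ), (Gnrs n r s plus).Adj a b →
          ((Gnrs n r s plus).induce Sᶜ).Reachable ⟨a, ha⟩ ⟨b, hb⟩ :=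
        fun a b ha hb h => SimpleGraph.Adj.reachable (h : ((Gnrs n r s plus).induce Sᶜ).Adj ⟨a, ha⟩ ⟨b, hb⟩)
      have hcov : ∀ i : ℕ, 1 ≤ i → i ≤ n - 2 → n - 1 - r ≤ i ∨ i ≤ s := by
        intro i hi1 hi2; omega
      have main : ∃ (z0 : Fin n) (hz0 : z0 ∈ Sᶜ), ∀ (w : Fin n) (hw : w ∈ Sᶜ),
          ((Gnrs n r s plus).induce Sᶜ).Reachable ⟨w, hw⟩ ⟨z0, hz0⟩ := by
        by_cases h0 : (⟨0, show 0 < n by omega⟩ : Fin n) ∈ S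
        · by_cases hl : (⟨n-1, show n-1 < n by omega⟩ : Fin n) ∈ S
          · -- both endpoints deleted
            have hmid : ∀ u : Fin n, 1 ≤ u.val → u.val ≤ n - 2 → u ∈ Sᶜ := by
              intro u h1 h2
              rw [Set.mem_compl_iff]
              intro huS
              have h3 := three_le h0 hl huS (show (0:ℕ) ≠ n-1 by omega)
                (show (0:ℕ) ≠ u.val by omega) (show n-1 ≠ u.val by omega)
              omega
            refine ⟨⟨1, show 1 < n by omega⟩, hmid _ (Nat.le_refl 1) (show (1:ℕ) ≤ n-2 by omega), ?_⟩
            intro w hw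
            have hw' : w ∉ S := hw
            have hw0 : w.val ≠ 0 := val_ne hw' h0
            have hwl : w.val ≠ n - 1 := val_ne hw' hl
            have hwlt := w.isLt
            exact (reach_spine hG (w.val - 1) ⟨1, show 1 < n by omega⟩ w
              (hmid _ (Nat.le_refl 1) (show (1:ℕ) ≤ n-2 by omega)) hw
              (show w.val = 1 + (w.val - 1) by omega)
              (fun z h1 h2 => hmid z h1 (by omega))).symm
          · -- 0 deleted, n-1 survives : anchor n-1
            refine ⟨⟨n-1, show n-1 < n by omega⟩, hl, ?_⟩
            intro w hw
            have hw' : w ∉ S := hw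
            have hw0 : w.val ≠ 0 := val_ne hw' h0
            have hwlt := w.isLt
            by_cases hwl : w.val = n - 1
            · have hwe : (⟨w, hw⟩ : ↥Sᶜ) = ⟨⟨n-1, show n-1 < n by omega⟩, hl⟩ :=
                Subtype.ext (Fin.ext hwl)
              rw [hwe]
            · by_cases hb : ∀ z : Fin n, w.val ≤ z.val → z.val ≤ n - 2 → z ∉ S
              · refine (reach_spine hG (n-2-w.val) w ⟨n-2, show n-2 < n by omega⟩ hw
                  (hb _ (show w.val ≤ n-2 by omega) (Nat.le_refl _))
                  (show n-2 = w.val + (n-2-w.val) by omega)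
                  (fun z h1 h2 => hb z h1 h2)).trans
                  (step _ _ (hb _ (show w.val ≤ n-2 by omega) (Nat.le_refl _)) hl
                    (adj_succ (show n-1 = (n-2) + 1 by omega)))
              · push_neg at hb
                obtain ⟨z, hz1, hz2, hzS⟩ := hb
                have hzw : w.val ≠ z.val := val_ne hw' hzS
                have hlow : ∀ u : Fin n, 1 ≤ u.val → u.val ≤ w.val → u ∈ Sᶜ := by
                  intro u h1 h2
                  rw [Set.mem_compl_iff]
                  intro huS
                  have h3 := three_le h0 hzS huS (show (0:ℕ) ≠ z.val by omega)
                    (show (0:ℕ) ≠ u.val by omega) (show z.val ≠ u.val by omega)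
                  omega
                refine ((reach_spine hG (w.val - 1) ⟨1, show 1 < n by omega⟩ w
                  (hlow _ (Nat.le_refl 1) (show (1:ℕ) ≤ w.val by omega)) hw
                  (show w.val = 1 + (w.val - 1) by omega)
                  (fun u h1 h2 => hlow u h1 h2)).symm).trans
                  (step _ _ (hlow _ (Nat.le_refl 1) (show (1:ℕ) ≤ w.val by omega)) hl
                    (adj_hublast hn hs rfl (Nat.le_refl 1) (show (1:ℕ) ≤ s by omega)))
        · by_cases hl : (⟨n-1, show n-1 < n by omega⟩ : Fin n) ∈ S
          · -- n-1 deleted, 0 survives : anchor 0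
            refine ⟨⟨0, show 0 < n by omega⟩, h0, ?_⟩
            intro w hw
            have hw' : w ∉ S := hw
            have hwl : w.val ≠ n - 1 := val_ne hw' hl
            have hwlt := w.isLt
            by_cases hw0 : w.val = 0
            · have hwe : (⟨w, hw⟩ : ↥Sᶜ) = ⟨⟨0, show 0 < n by omega⟩, h0⟩ :=
                Subtype.ext (Fin.ext hw0)
              rw [hwe]
            · by_cases hb : ∀ z : Fin n, 1 ≤ z.val → z.val ≤ w.val → z ∉ S
              · exact ((reach_spine hG (w.val - 1) ⟨1, show 1 < n by omega⟩ w
                  (hb _ (Nat.le_refl 1) (show (1:ℕ) ≤ w.val by omega)) hw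
                  (show w.val = 1 + (w.val - 1) by omega)
                  (fun z h1 h2 => hb z h1 h2)).symm).trans
                  (step _ _ (hb _ (Nat.le_refl 1) (show (1:ℕ) ≤ w.val by omega)) h0
                    ((adj_succ (show (1:ℕ) = 0 + 1 by omega)).symm))
              · push_neg at hb
                obtain ⟨z, hz1, hz2, hzS⟩ := hb
                have hzw : w.val ≠ z.val := val_ne hw' hzS
                have hup : ∀ u : Fin n, w.val ≤ u.val → u.val ≤ n - 2 → u ∈ Sᶜ := by
                  intro u h1 h2
                  rw [Set.mem_compl_iff]
                  intro huS
                  have h3 := three_le hl hzS huS (show n-1 ≠ z.val by omega)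
                    (show n-1 ≠ u.val by omega) (show z.val ≠ u.val by omega)
                  omega
                exact (reach_spine hG (n-2-w.val) w ⟨n-2, show n-2 < n by omega⟩ hw
                  (hup _ (show w.val ≤ n-2 by omega) (Nat.le_refl _))
                  (show n-2 = w.val + (n-2-w.val) by omega)
                  (fun z h1 h2 => hup z h1 h2)).trans
                  (step _ _ (hup _ (show w.val ≤ n-2 by omega) (Nat.le_refl _)) h0
                    ((adj_hub0 hn hr rfl (show n-1-r ≤ n-2 by omega) (Nat.le_refl _)).symm))
          · -- both survive : anchor 0
            have h0' : (⟨0, show 0 < n by omega⟩ : Fin n) ∈ Sᶜ := h0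
            have hl' : (⟨n-1, show n-1 < n by omega⟩ : Fin n) ∈ Sᶜ := hl
            have hublink : ((Gnrs n r s plus).induce Sᶜ).Reachable
                ⟨⟨n-1, show n-1 < n by omega⟩, hl'⟩ ⟨⟨0, show 0 < n by omega⟩, h0'⟩ := by
              rcases hplus_or with hp | ⟨hr2, hs2⟩
              · exact step _ _ hl' h0' ((adj_plus hn hp rfl rfl).symm)
              · have hn5 : 5 ≤ n := by omega
                by_cases h1 : (⟨1, show 1 < n by omega⟩ : Fin n) ∈ S
                · by_cases h2 : (⟨n-2, show n-2 < n by omega⟩ : Fin n) ∈ S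
                  · have hmid : ∀ u : Fin n, u.val ≠ 1 → u.val ≠ n - 2 → u ∈ Sᶜ := by
                      intro u hu1 hu2
                      rw [Set.mem_compl_iff]
                      intro huS
                      have h3 := three_le h1 h2 huS (show (1:ℕ) ≠ n-2 by omega)
                        (show (1:ℕ) ≠ u.val from fun he => hu1 he.symm)
                        (show n-2 ≠ u.val from fun he => hu2 he.symm)
                      omega
                    have hv2 : (⟨2, show 2 < n by omega⟩ : Fin n) ∈ Sᶜ :=
                      hmid _ (show (2:ℕ) ≠ 1 by omega) (show (2:ℕ) ≠ n-2 by omega)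
                    have hv3 : (⟨n-3, show n-3 < n by omega⟩ : Fin n) ∈ Sᶜ :=
                      hmid _ (show n-3 ≠ 1 by omega) (show n-3 ≠ n-2 by omega)
                    refine (step _ _ hl' hv2
                      ((adj_hublast hn hs rfl (show (1:ℕ) ≤ 2 by omega) hs2).symm)).trans
                      ((reach_spine hG (n-5) ⟨2, show 2 < n by omega⟩ ⟨n-3, show n-3 < n by omega⟩
                        hv2 hv3 (show n-3 = 2 + (n-5) by omega)
                        (fun u hu1 hu2 => by
                          have ha' : 2 ≤ u.val := hu1
                          have hb' : u.val ≤ n-3 := hu2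
                          exact hmid u (by omega) (by omega))).trans
                      (step _ _ hv3 h0'
                        ((adj_hub0 hn hr rfl (show n-1-r ≤ n-3 by omega)
                          (show n-3 ≤ n-2 by omega)).symm)))
                  · exact (step _ _ hl' h2 ((adj_succ (show n-1 = (n-2)+1 by omega)).symm)).trans
                      (step _ _ h2 h0'
                        ((adj_hub0 hn hr rfl (show n-1-r ≤ n-2 by omega) (Nat.le_refl _)).symm))
                · exact (step _ _ hl' h1
                    ((adj_hublast hn hs rfl (Nat.le_refl 1) (show (1:ℕ) ≤ s by omega)).symm)).trans
                    (step _ _ h1 h0' ((adj_succ (show (1:ℕ) = 0 + 1 by omega)).symm))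
            refine ⟨⟨0, show 0 < n by omega⟩, h0', ?_⟩
            intro w hw
            have hw' : w ∉ S := hw
            have hwlt := w.isLt
            by_cases hw0 : w.val = 0
            · have hwe : (⟨w, hw⟩ : ↥Sᶜ) = ⟨⟨0, show 0 < n by omega⟩, h0'⟩ :=
                Subtype.ext (Fin.ext hw0)
              rw [hwe]
            · by_cases hwl : w.val = n - 1
              · have hwe : (⟨w, hw⟩ : ↥Sᶜ) = ⟨⟨n-1, show n-1 < n by omega⟩, hl'⟩ :=
                Subtype.ext (Fin.ext hwl)
                rw [hwe]
                exact hublink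
              · rcases hcov w.val (by omega) (by omega) with hc1 | hc2
                · exact step _ _ hw h0'
                    ((adj_hub0 hn hr rfl hc1 (show w.val ≤ n-2 by omega)).symm)
                · exact (step _ _ hw hl'
                    (adj_hublast hn hs rfl (by omega) hc2)).trans hublink
      obtain ⟨z0, hz0, hall⟩ := main
      rw [SimpleGraph.connected_iff]
      refine ⟨fun u v => ?_, ⟨⟨z0, hz0⟩⟩⟩
      exact (hall u.1 u.2).trans (hall v.1 v.2).symm


end K24Paper
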